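/- Let G and H be finite groups. The functor −×_{(H,G)}−: ^H Fin_G × (^G Fin_H)^sep → Fin preserves pullbacks, finite coproducts, and epimorphisms separately in each variable. -/

import Mathlib

open CategoryTheory CategoryTheory.Limits MulOpposite

namespace Paper

/-- A functor preserves pullbacks, finite coproducts, and epimorphisms. -/
def PreservesPCE {C : Type*} {D : Type*} [Category C] [Category D] (F : C ⥤ D) : Prop :=
  Nonempty (PreservesLimitsOfShape WalkingCospan F) ∧
  (∀ (J : Type) [Finite J], Nonempty (PreservesColimitsOfShape (Discrete J) F)) ∧
  F.PreservesEpimorphisms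

/-- `Fun_pce C D`: the full subcategory of the functor category spanned by the functors
preserving pullbacks, finite coproducts and epimorphisms. -/
abbrev FunPCE (C : Type*) (D : Type*) [Category C] [Category D] :=
  ObjectProperty.FullSubcategory (fun F : C ⥤ D => PreservesPCE F)

/-- Finite sets with an action of the monoid `M`. -/
abbrev ActCat (M : Type) [Monoid M] := Action FintypeCat.{0} (MonCat.of M)

/-- `Fin_G`: finite right `G`-sets (encoded as left `Gᵐᵒᵖ`-actions). -/
abbrev FinRight (G : Type) [Group G] := ActCat Gᵐᵒᵖ

/-- `^G Fin`: the category of finite *free* left `G`-sets. -/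
abbrev FinFreeL (G : Type) [Group G] :=
  ObjectProperty.FullSubcategory (fun X : ActCat G => ∀ (g : G) (x : X.V), ConcreteCategory.hom (X.ρ g) x = x → g = 1)

/-- Finite `(G,H)`-bisets: a left `G`-action and a commuting right `H`-action. -/
abbrev BiAct (G H : Type) [Group G] [Group H] := ActCat (G × Hᵐᵒᵖ)

/-- The left `G`-action of a `(G,H)`-biset is free. -/
def LeftFree {G H : Type} [Group G] [Group H] (X : BiAct G H) : Prop :=
  ∀ (g : G) (x : X.V), ConcreteCategory.hom (X.ρ (g, 1)) x = x → g = 1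

/-- `^G Fin_H`: finite `(G,H)`-bisets whose left `G`-action is free. -/
abbrev BiFin (G H : Type) [Group G] [Group H] :=
  ObjectProperty.FullSubcategory (fun X : BiAct G H => LeftFree X)

/-- The separable `(G,H)`-biset `G × T` attached to a finite right `H`-set `T`,
with actions `g • (g', t) • h = (g * g', t • h)`. -/
noncomputable def sepBiset (G H : Type) [Group G] [Group H] [Fintype G]
    (T : ActCat Hᵐᵒᵖ) : BiAct G H where
  V := FintypeCat.of (G × T.V)
  ρ :=
    { toFun := fun m => FintypeCat.homMk (fun p : G × T.V =>
        (m.1 * p.1, ConcreteCategory.hom (T.ρ m.2) p.2))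
      map_one' := by
        apply FintypeCat.hom_ext
        intro p
        show ((1 : G) * p.1, ConcreteCategory.hom (T.ρ 1) p.2) = p
        rw [map_one]
        simp
      map_mul' := by
        intro a b
        apply FintypeCat.hom_ext
        intro p
        show ((a.1 * b.1) * p.1, ConcreteCategory.hom (T.ρ (a.2 * b.2)) p.2)
          = (a.1 * (b.1 * p.1), ConcreteCategory.hom (T.ρ a.2) (ConcreteCategory.hom (T.ρ b.2) p.2))
        rw [mul_assoc, map_mul]
        rfl }

/-- A `(G,H)`-biset is separable if it is isomorphic to `G × T`
for some finite right `H`-set `T`. -/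
def Separable (G H : Type) [Group G] [Group H] [Fintype G] (X : BiAct G H) : Prop :=
  ∃ T : ActCat Hᵐᵒᵖ, Nonempty (X ≅ sepBiset G H T)

/-- `(^G Fin_H)^sep`: the full subcategory of separable bisets. -/
abbrev SepCat (G H : Type) [Group G] [Group H] [Fintype G] :=
  ObjectProperty.FullSubcategory (fun X : BiFin G H => Separable G H X.obj)

variable {G H : Type} [Group G] [Group H]

/-- The relation generating `X ×_{(H,G)} Y`: `(x·g, y) ~ (x, g·y)` and `(h·x, y) ~ (x, y·h)`. -/
def pairRel (X : BiAct H G) (Y : BiAct G H) : X.V × Y.V → X.V × Y.V → Prop :=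
  fun p q =>
    (∃ g : G, p.1 = ConcreteCategory.hom (X.ρ (1, op g)) q.1 ∧ q.2 = ConcreteCategory.hom (Y.ρ (g, 1)) p.2) ∨
    (∃ h : H, q.1 = ConcreteCategory.hom (X.ρ (h, 1)) p.1 ∧ p.2 = ConcreteCategory.hom (Y.ρ (1, op h)) q.2)

/-- `X ×_{(H,G)} Y`: the quotient of `X × Y` by the equivalence relation generated by
`(x·g, y) ~ (x, g·y)` and `(h·x, y) ~ (x, y·h)`. -/
def PairSet (X : BiAct H G) (Y : BiAct G H) : Type := Quot (pairRel X Y)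

instance (X : BiAct H G) (Y : BiAct G H) : Finite (PairSet X Y) :=
  Quot.finite _

/-- `X ×_{(H,G)} Y` as an object of the category of finite sets. -/
noncomputable def pairObj (X : BiAct H G) (Y : BiAct G H) : FintypeCat :=
  letI := Fintype.ofFinite (PairSet X Y)
  FintypeCat.of (PairSet X Y)

/-- Functoriality of `X ×_{(H,G)} Y` in `X`. -/
noncomputable def pairMapFst {X X' : BiAct H G} (f : X ⟶ X') (Y : BiAct G H) :
    pairObj X Y ⟶ pairObj X' Y :=
  FintypeCat.homMk <| Quot.map (fun p : X.V × Y.V => (f.hom p.1, p.2)) (by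
    rintro ⟨x, y⟩ ⟨x', y'⟩ (⟨g, h1, h2⟩ | ⟨h, h1, h2⟩)
    · left
      refine ⟨g, ?_, h2⟩
      have := ConcreteCategory.congr_hom (f.comm (1, op g)) x'
      simp only [FintypeCat.comp_apply] at this
      dsimp only at h1 ⊢
      rw [h1]; exact this
    · right
      refine ⟨h, ?_, h2⟩
      have := ConcreteCategory.congr_hom (f.comm (h, 1)) x
      simp only [FintypeCat.comp_apply] at this
      dsimp only at h1 ⊢
      rw [h1]; exact this)

/-- Functoriality of `X ×_{(H,G)} Y` in `Y`. -/
noncomputable def pairMapSnd (X : BiAct H G) {Y Y' : BiAct G H} (f : Y ⟶ Y') :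
    pairObj X Y ⟶ pairObj X Y' :=
  FintypeCat.homMk <| Quot.map (fun p : X.V × Y.V => (p.1, f.hom p.2)) (by
    rintro ⟨x, y⟩ ⟨x', y'⟩ (⟨g, h1, h2⟩ | ⟨h, h1, h2⟩)
    · left
      refine ⟨g, h1, ?_⟩
      have := ConcreteCategory.congr_hom (f.comm (g, 1)) y
      simp only [FintypeCat.comp_apply] at this
      dsimp only at h2 ⊢
      rw [h2]; exact this
    · right
      refine ⟨h, h1, ?_⟩
      have := ConcreteCategory.congr_hom (f.comm (1, op h)) y'
      simp only [FintypeCat.comp_apply] at this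
      dsimp only at h2 ⊢
      rw [h2]; exact this)

/-- For a fixed biset `X`, the functor `X ×_{(H,G)} -` on all of `^G Fin_H`. -/
noncomputable def pairFstFunctorRaw (X : BiAct H G) : BiAct G H ⥤ FintypeCat where
  obj Y := pairObj X Y
  map f := pairMapSnd X f
  map_id Y := by
    apply FintypeCat.hom_ext
    intro q
    induction q using Quot.ind
    rfl
  map_comp f g := by
    apply FintypeCat.hom_ext
    intro q
    induction q using Quot.ind
    rfl

/-- For a fixed biset `X` in `^H Fin_G`, the functor `X ×_{(H,G)} -` on `(^G Fin_H)^sep`. -/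
noncomputable def pairFstFunctor (G H : Type) [Group G] [Group H] [Fintype G]
    (X : BiAct H G) : SepCat G H ⥤ FintypeCat :=
  ObjectProperty.ι _ ⋙ ObjectProperty.ι _ ⋙ pairFstFunctorRaw X

/-- For a fixed biset `Y` in `^G Fin_H`, the functor `- ×_{(H,G)} Y` on `^H Fin_G`. -/
noncomputable def pairSndFunctor (G H : Type) [Group G] [Group H]
    (Y : BiAct G H) : BiFin H G ⥤ FintypeCat where
  obj X := pairObj X.obj Y
  map f := pairMapFst f.hom Y
  map_id X := by
    apply FintypeCat.hom_ext
    intro q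
    induction q using Quot.ind
    rfl
  map_comp f g := by
    apply FintypeCat.hom_ext
    intro q
    induction q using Quot.ind
    rfl

variable (G H) [Fintype G] [Fintype H]

/-- The functor `(^G Fin_H)^sep ⟶ Fun_pce(^H Fin_G, Fin)` induced by the pairing. -/
noncomputable def pairingPhi
    (h : ∀ Y : SepCat G H, PreservesPCE (pairSndFunctor G H Y.obj.obj)) :
    SepCat G H ⥤ FunPCE (BiFin H G) FintypeCat where
  obj Y := ⟨pairSndFunctor G H Y.obj.obj, h Y⟩
  map {Y Y'} f := ObjectProperty.homMk
    { app := fun X => pairMapSnd X.obj f.hom.hom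
      naturality := by
        intro X X' g
        apply FintypeCat.hom_ext
        intro q
        induction q using Quot.ind
        rfl }
  map_id Y := by
    apply ObjectProperty.hom_ext
    apply NatTrans.ext
    funext X
    apply FintypeCat.hom_ext
    intro q
    induction q using Quot.ind
    rfl
  map_comp f g := by
    apply ObjectProperty.hom_ext
    apply NatTrans.ext
    funext X
    apply FintypeCat.hom_ext
    intro q
    induction q using Quot.ind
    rfl

/-- The functor `^H Fin_G ⟶ Fun_pce((^G Fin_H)^sep, Fin)` induced by the pairing. -/
noncomputable def pairingPsi
    (h : ∀ X : BiFin H G, PreservesPCE (pairFstFunctor G H X.obj)) :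
    BiFin H G ⥤ FunPCE (SepCat G H) FintypeCat where
  obj X := ⟨pairFstFunctor G H X.obj, h X⟩
  map {X X'} f := ObjectProperty.homMk
    { app := fun Y => pairMapFst f.hom Y.obj.obj
      naturality := by
        intro Y Y' g
        apply FintypeCat.hom_ext
        intro q
        induction q using Quot.ind
        rfl }
  map_id X := by
    apply ObjectProperty.hom_ext
    apply NatTrans.ext
    funext Y
    apply FintypeCat.hom_ext
    intro q
    induction q using Quot.ind
    rfl
  map_comp f g := by
    apply ObjectProperty.hom_ext
    apply NatTrans.ext
    funext Y
    apply FintypeCat.hom_ext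
    intro q
    induction q using Quot.ind
    rfl

end Paper

namespace Paper


attribute [reducible] sepBiset PairSet

section Aux

universe u

instance endCoeFun {X : FintypeCat.{0}} : CoeFun (End X) (fun _ => X → X) :=
  ⟨fun f => ConcreteCategory.hom f⟩

lemma rho_rho {M : Type} [Monoid M] (X : ActCat M) (a b : M) (x : X.V) :
    X.ρ a (X.ρ b x) = X.ρ (a * b) x := by
  rw [map_mul]; rfl

lemma rho_one_apply {M : Type} [Monoid M] (X : ActCat M) (x : X.V) :
    X.ρ 1 x = x := by
  rw [Action.ρ_one]; rfl

@[simp]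
lemma rho_one_one_apply {A B : Type} [Monoid A] [Monoid B] (X : ActCat (A × B)) (x : X.V) :
    X.ρ (1, 1) x = x :=
  rho_one_apply X x

lemma hom_rho {M : Type} [Monoid M] {X Y : ActCat M} (f : X ⟶ Y) (m : M) (x : X.V) :
    f.hom (X.ρ m x) = Y.ρ m (f.hom x) :=
  ConcreteCategory.congr_hom (f.comm m) x

lemma sep_rho (G H : Type) [Group G] [Group H] [Fintype G] (T : ActCat Hᵐᵒᵖ)
    (m : G × Hᵐᵒᵖ) (p : (sepBiset G H T).V) :
    (sepBiset G H T).ρ m p = (m.1 * p.1, T.ρ m.2 p.2) := rfl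

end Aux

lemma rho_cancel {M : Type} [Monoid M] (X : ActCat M) {a b : M} (hab : a * b = 1) (x : X.V) :
    X.ρ a (X.ρ b x) = x := by
  rw [rho_rho, hab, rho_one_apply]
section Sig

variable {G H : Type} [Group G] [Group H]

/-- The `H × G`-translation on `X.V × Y.V` whose orbit relation generates `PairSet`. -/
def sig (X : BiAct H G) (Y : BiAct G H) (h : H) (g : G) (p : X.V × Y.V) : X.V × Y.V :=
  (X.ρ (h, op g⁻¹) p.1, Y.ρ (g, op h⁻¹) p.2)

lemma sig_sig (X : BiAct H G) (Y : BiAct G H) (h h' : H) (g g' : G) (p : X.V × Y.V) :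
    sig X Y h g (sig X Y h' g' p) = sig X Y (h * h') (g * g') p := by
  unfold sig
  rw [rho_rho, rho_rho]
  simp [Prod.mk_mul_mk, ← MulOpposite.op_inv, ← op_mul, mul_inv_rev]

lemma sig_one (X : BiAct H G) (Y : BiAct G H) (p : X.V × Y.V) :
    sig X Y 1 1 p = p := by
  unfold sig
  simp [rho_one_apply]
  rw [rho_one_one_apply, rho_one_one_apply]

lemma pair_mk_eq_iff (X : BiAct H G) (Y : BiAct G H) (p q : X.V × Y.V) :
    Quot.mk (pairRel X Y) p = Quot.mk (pairRel X Y) q ↔ ∃ h g, q = sig X Y h g p := by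
  rw [Quot.eq]
  constructor
  · intro hEq
    induction hEq with
    | rel a b hab =>
        rcases hab with ⟨g, h1, h2⟩ | ⟨h, h1, h2⟩
        · refine ⟨1, g, ?_⟩
          ext
          · show b.1 = X.ρ (1, op g⁻¹) a.1
            rw [h1, rho_rho]
            simp [rho_one_apply, ← op_mul]
            rw [rho_one_one_apply]
          · show b.2 = Y.ρ (g, op (1:H)⁻¹) a.2
            rw [h2]
            simp
        · refine ⟨h, 1, ?_⟩
          ext
          · show b.1 = X.ρ (h, op (1:G)⁻¹) a.1
            rw [h1]
            simp
          · show b.2 = Y.ρ (1, op h⁻¹) a.2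
            rw [h2, rho_rho]
            simp [rho_one_apply, ← op_mul]
            rw [rho_one_one_apply]
    | refl a => exact ⟨1, 1, (sig_one X Y a).symm⟩
    | symm a b _ ih =>
        obtain ⟨h, g, rfl⟩ := ih
        exact ⟨h⁻¹, g⁻¹, by rw [sig_sig]; simp [sig_one]⟩
    | trans a b c _ _ ih1 ih2 =>
        obtain ⟨h, g, rfl⟩ := ih1
        obtain ⟨h', g', rfl⟩ := ih2
        exact ⟨h' * h, g' * g, sig_sig X Y h' h g' g a⟩
  · rintro ⟨h, g, rfl⟩
    have step1 : pairRel X Y p (sig X Y h 1 p) := by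
      right
      refine ⟨h, ?_, ?_⟩
      · show (sig X Y h 1 p).1 = X.ρ (h, 1) p.1
        unfold sig
        simp
      · show p.2 = Y.ρ (1, op h) (sig X Y h 1 p).2
        unfold sig
        rw [rho_rho]
        simp [rho_one_apply, ← op_mul]
        rw [rho_one_one_apply]
    have step2 : pairRel X Y (sig X Y h 1 p) (sig X Y h g p) := by
      left
      have : sig X Y h g p = sig X Y 1 g (sig X Y h 1 p) := by
        rw [sig_sig]; simp
      rw [this]
      refine ⟨g, ?_, ?_⟩
      · show (sig X Y h 1 p).1 = X.ρ (1, op g) (sig X Y 1 g (sig X Y h 1 p)).1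
        unfold sig
        rw [rho_rho, rho_rho]
        simp [← op_mul]
      · show (sig X Y 1 g (sig X Y h 1 p)).2 = Y.ρ (g, 1) (sig X Y h 1 p).2
        unfold sig
        simp
    exact Relation.EqvGen.trans _ _ _ (Relation.EqvGen.rel _ _ step1)
      (Relation.EqvGen.rel _ _ step2)

lemma sig_free {G H : Type} [Group G] [Group H] [Fintype G]
    {X : BiAct H G} {Y : BiAct G H} (hX : LeftFree X) (hY : Separable G H Y)
    {h : H} {g : G} {p : X.V × Y.V} (hp : sig X Y h g p = p) : h = 1 ∧ g = 1 := by
  obtain ⟨T, ⟨e⟩⟩ := hY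
  have h2 : Y.ρ (g, op h⁻¹) p.2 = p.2 := congrArg Prod.snd hp
  have h3 := congrArg e.hom.hom h2
  rw [hom_rho] at h3
  have h4 : g * (e.hom.hom p.2).1 = (e.hom.hom p.2).1 :=
    congrArg Prod.fst h3
  have hg : g = 1 := by
    have := mul_right_cancel (b := (e.hom.hom p.2).1) (a := g) (c := 1) (by simpa using h4)
    exact this
  subst hg
  have h1 : X.ρ (h, (1 : Gᵐᵒᵖ)) p.1 = p.1 := by
    have := congrArg Prod.fst hp
    simpa [sig] using this
  exact ⟨hX h p.1 h1, rfl⟩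

end Sig
section Generic

variable {M : Type} [Group M]

/-- Carrier of the pointwise pullback. -/
def PbCarrier {A B C : ActCat M} (f : A ⟶ C) (g : B ⟶ C) : Type :=
  {p : A.V × B.V // f.hom p.1 = g.hom p.2}

instance {A B C : ActCat M} (f : A ⟶ C) (g : B ⟶ C) : Finite (PbCarrier f g) := by
  unfold PbCarrier; infer_instance

/-- The pointwise pullback of two equivariant maps. -/
noncomputable def pbAct {A B C : ActCat M} (f : A ⟶ C) (g : B ⟶ C) : ActCat M where
  V := letI := Fintype.ofFinite (PbCarrier f g); FintypeCat.of (PbCarrier f g)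
  ρ :=
    { toFun := fun m => FintypeCat.homMk fun (p : PbCarrier f g) => (⟨(A.ρ m p.1.1, B.ρ m p.1.2), by
        rw [hom_rho, hom_rho, p.2]⟩ : PbCarrier f g)
      map_one' := by
        apply FintypeCat.hom_ext; intro (p : PbCarrier f g)
        exact Subtype.ext (Prod.ext (rho_one_apply A p.1.1) (rho_one_apply B p.1.2))
      map_mul' := by
        intro a b
        apply FintypeCat.hom_ext; intro (p : PbCarrier f g)
        exact Subtype.ext (Prod.ext (rho_rho A a b p.1.1).symm (rho_rho B a b p.1.2).symm) }

lemma pbAct_rho {A B C : ActCat M} (f : A ⟶ C) (g : B ⟶ C) (m : M) (p : PbCarrier f g) :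
    ((pbAct f g).ρ m p : PbCarrier f g) = ⟨(A.ρ m p.1.1, B.ρ m p.1.2), by
      rw [hom_rho, hom_rho, p.2]⟩ := rfl

noncomputable def pbFst {A B C : ActCat M} (f : A ⟶ C) (g : B ⟶ C) : pbAct f g ⟶ A where
  hom := FintypeCat.homMk fun (p : PbCarrier f g) => p.1.1
  comm := fun m => rfl

noncomputable def pbSnd {A B C : ActCat M} (f : A ⟶ C) (g : B ⟶ C) : pbAct f g ⟶ B where
  hom := FintypeCat.homMk fun (p : PbCarrier f g) => p.1.2
  comm := fun m => rfl

lemma pbComm {A B C : ActCat M} (f : A ⟶ C) (g : B ⟶ C) :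
    pbFst f g ≫ f = pbSnd f g ≫ g := by
  apply Action.hom_ext
  apply FintypeCat.hom_ext; intro (p : PbCarrier f g)
  exact p.2

noncomputable def pbIsLimit {A B C : ActCat M} (f : A ⟶ C) (g : B ⟶ C) :
    IsLimit (PullbackCone.mk (pbFst f g) (pbSnd f g) (pbComm f g)) := by
  refine PullbackCone.IsLimit.mk _ (fun s => ?_) (fun s => ?_) (fun s => ?_) (fun s m h1 h2 => ?_)
  · exact
      { hom := FintypeCat.homMk fun w => (⟨(s.fst.hom w, s.snd.hom w),
          ConcreteCategory.congr_hom (congrArg Action.Hom.hom s.condition) w⟩ : PbCarrier f g)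
        comm := by
          intro m
          apply FintypeCat.hom_ext; intro w
          exact Subtype.ext (Prod.ext (hom_rho s.fst m w) (hom_rho s.snd m w)) }
  · apply Action.hom_ext; rfl
  · apply Action.hom_ext; rfl
  · apply Action.hom_ext
    apply FintypeCat.hom_ext; intro w
    refine Subtype.ext (Prod.ext ?_ ?_)
    · exact ConcreteCategory.congr_hom (congrArg Action.Hom.hom h1) w
    · exact ConcreteCategory.congr_hom (congrArg Action.Hom.hom h2) w

/-- Carrier of the disjoint union. -/
def SigCarrier {J : Type} (A : J → ActCat M) : Type := Σ j, (A j).V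

instance {J : Type} [Finite J] (A : J → ActCat M) : Finite (SigCarrier A) := by
  unfold SigCarrier; infer_instance

/-- Pointwise disjoint union of actions. -/
noncomputable def sigmaAct {J : Type} [Finite J] (A : J → ActCat M) : ActCat M where
  V := letI := Fintype.ofFinite (SigCarrier A); FintypeCat.of (SigCarrier A)
  ρ :=
    { toFun := fun m => FintypeCat.homMk fun (p : SigCarrier A) => (⟨p.1, (A p.1).ρ m p.2⟩ : SigCarrier A)
      map_one' := by
        apply FintypeCat.hom_ext; intro (p : SigCarrier A)
        exact congrArg (Sigma.mk p.1) (rho_one_apply (A p.1) p.2)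
      map_mul' := by
        intro a b
        apply FintypeCat.hom_ext; intro (p : SigCarrier A)
        exact congrArg (Sigma.mk p.1) (rho_rho (A p.1) a b p.2).symm }

noncomputable def sigmaInj {J : Type} [Finite J] (A : J → ActCat M) (j : J) :
    A j ⟶ sigmaAct A where
  hom := FintypeCat.homMk fun a => (⟨j, a⟩ : SigCarrier A)
  comm := fun m => rfl

noncomputable def sigmaIsColimit {J : Type} [Finite J] (A : J → ActCat M) :
    IsColimit (Cofan.mk (sigmaAct A) (sigmaInj A)) := by
  refine mkCofanColimit _ (fun t => ?_) (fun t j => ?_) (fun t m hm => ?_)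
  · exact
      { hom := FintypeCat.homMk fun (p : SigCarrier A) => (t.inj p.1).hom p.2
        comm := by
          intro m
          apply FintypeCat.hom_ext; intro (p : SigCarrier A)
          exact hom_rho (t.inj p.1) m p.2 }
  · apply Action.hom_ext; rfl
  · apply Action.hom_ext
    apply FintypeCat.hom_ext; intro (p : SigCarrier A)
    exact ConcreteCategory.congr_hom (congrArg Action.Hom.hom (hm p.1)) p.2

/-- Carrier of the `B ⊔ (B \ S)` construction. -/
def DblCarrier (B : ActCat M) (S : Set B.V) : Type := B.V ⊕ {b : B.V // b ∉ S}

attribute [reducible] DblCarrier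

instance (B : ActCat M) (S : Set B.V) : Finite (DblCarrier B S) := by
  unfold DblCarrier; infer_instance

lemma not_mem_of_rho {B : ActCat M} {S : Set B.V}
    (hS : ∀ (m : M) b, b ∈ S → B.ρ m b ∈ S) (m : M) {b : B.V} (hb : b ∉ S) :
    B.ρ m b ∉ S := fun hmem => hb (by
  have : B.ρ m⁻¹ (B.ρ m b) ∈ S := hS m⁻¹ _ hmem
  rwa [rho_rho, inv_mul_cancel, rho_one_apply] at this)

/-- The object `B ⊔ (B \ S)` used to test epimorphy. -/
noncomputable def doubleAct (B : ActCat M) (S : Set B.V)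
    (hS : ∀ (m : M) b, b ∈ S → B.ρ m b ∈ S) : ActCat M where
  V := letI := Fintype.ofFinite (DblCarrier B S); FintypeCat.of (DblCarrier B S)
  ρ :=
    { toFun := fun m => FintypeCat.homMk fun (p : DblCarrier B S) => (Sum.map (B.ρ m)
        (fun q => ⟨B.ρ m q.1, not_mem_of_rho hS m q.2⟩) p : DblCarrier B S)
      map_one' := by
        apply FintypeCat.hom_ext; intro (p : DblCarrier B S)
        rcases p with b | q
        · exact congrArg Sum.inl (rho_one_apply B b)
        · exact congrArg Sum.inr (Subtype.ext (rho_one_apply B q.1))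
      map_mul' := by
        intro a b
        apply FintypeCat.hom_ext; intro (p : DblCarrier B S)
        rcases p with c | q
        · exact congrArg Sum.inl (rho_rho B a b c).symm
        · exact congrArg Sum.inr (Subtype.ext (rho_rho B a b q.1).symm) }

noncomputable def dblInl (B : ActCat M) (S : Set B.V)
    (hS : ∀ (m : M) b, b ∈ S → B.ρ m b ∈ S) : B ⟶ doubleAct B S hS where
  hom := FintypeCat.homMk fun b => (Sum.inl b : DblCarrier B S)
  comm := fun m => rfl

open Classical in
noncomputable def dblMixFun (B : ActCat M) (S : Set B.V) (b : B.V) : DblCarrier B S :=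
  if hb : b ∈ S then Sum.inl b else Sum.inr ⟨b, hb⟩

noncomputable def dblMix (B : ActCat M) (S : Set B.V)
    (hS : ∀ (m : M) b, b ∈ S → B.ρ m b ∈ S) : B ⟶ doubleAct B S hS where
  hom := FintypeCat.homMk fun b => dblMixFun B S b
  comm := by
    intro m
    apply FintypeCat.hom_ext; intro b
    show dblMixFun B S (B.ρ m b) = (doubleAct B S hS).ρ m (dblMixFun B S b)
    unfold dblMixFun
    by_cases hb : b ∈ S
    · rw [dif_pos hb, dif_pos (hS m b hb)]
      rfl
    · rw [dif_neg hb, dif_neg (not_mem_of_rho hS m hb)]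
      rfl

lemma dbl_eq_of_epi {A B : ActCat M} (f : A ⟶ B)
    (hS : ∀ (m : M) b, b ∈ Set.range f.hom → B.ρ m b ∈ Set.range f.hom)
    (hcancel : f ≫ dblInl B _ hS = f ≫ dblMix B _ hS → dblInl B _ hS = dblMix B _ hS) :
    Function.Surjective f.hom := by
  have hcomp : f ≫ dblInl B _ hS = f ≫ dblMix B _ hS := by
    apply Action.hom_ext
    apply FintypeCat.hom_ext; intro a
    simp only [Action.comp_hom, FintypeCat.comp_apply]
    show (Sum.inl (f.hom a) : DblCarrier B _) = dblMixFun B _ (f.hom a)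
    unfold dblMixFun
    rw [dif_pos ⟨a, rfl⟩]
  have heq := hcancel hcomp
  intro b
  have hb : (Sum.inl b : DblCarrier B _) = dblMixFun B (Set.range f.hom) b :=
    ConcreteCategory.congr_hom (congrArg Action.Hom.hom heq) b
  show ∃ a, f.hom a = b
  by_contra hno
  push_neg at hno
  have hbS : b ∉ Set.range f.hom := by rintro ⟨a, ha⟩; exact hno a ha
  unfold dblMixFun at hb
  rw [dif_neg hbS] at hb
  exact Sum.inl_ne_inr hb

end Generic
section FintypeHelpers

open Classical in
noncomputable def fintypePullbackIsLimit {P A B C : FintypeCat.{0}} (f : A ⟶ C) (g : B ⟶ C)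
    (p₁ : P ⟶ A) (p₂ : P ⟶ B) (hcomm : p₁ ≫ f = p₂ ≫ g)
    (hinj : ∀ w w', p₁ w = p₁ w' → p₂ w = p₂ w' → w = w')
    (hsurj : ∀ a b, f a = g b → ∃ w, p₁ w = a ∧ p₂ w = b) :
    IsLimit (PullbackCone.mk p₁ p₂ hcomm) := by
  refine PullbackCone.IsLimit.mk _ (fun s => ?_) (fun s => ?_) (fun s => ?_) (fun s m h1 h2 => ?_)
  · exact FintypeCat.homMk fun w => (hsurj (s.fst w) (s.snd w) (ConcreteCategory.congr_hom s.condition w)).choose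
  · apply FintypeCat.hom_ext; intro w
    exact (hsurj (s.fst w) (s.snd w) (ConcreteCategory.congr_hom s.condition w)).choose_spec.1
  · apply FintypeCat.hom_ext; intro w
    exact (hsurj (s.fst w) (s.snd w) (ConcreteCategory.congr_hom s.condition w)).choose_spec.2
  · apply FintypeCat.hom_ext; intro w
    have hch := (hsurj (s.fst w) (s.snd w) (ConcreteCategory.congr_hom s.condition w)).choose_spec
    exact hinj _ _ ((ConcreteCategory.congr_hom h1 w).trans hch.1.symm) ((ConcreteCategory.congr_hom h2 w).trans hch.2.symm)

open Classical in
noncomputable def fintypeCofanIsColimit {J : Type} (A : J → FintypeCat.{0}) (W : FintypeCat.{0})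
    (inj : ∀ j, A j ⟶ W)
    (hinj : ∀ j j' a a', inj j a = inj j' a' → (⟨j, a⟩ : Σ j, A j) = ⟨j', a'⟩)
    (hsurj : ∀ w, ∃ p : Σ j, A j, inj p.1 p.2 = w) :
    IsColimit (Cofan.mk W inj) := by
  refine mkCofanColimit _ (fun t => ?_) (fun t j => ?_) (fun t m hm => ?_)
  · exact FintypeCat.homMk fun w => t.inj (hsurj w).choose.1 (hsurj w).choose.2
  · apply FintypeCat.hom_ext; intro a
    show t.inj (hsurj (inj j a)).choose.1 (hsurj (inj j a)).choose.2 = t.inj j a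
    have hch := (hsurj (inj j a)).choose_spec
    exact congrArg (fun q : Σ j, A j => t.inj q.1 q.2) (hinj _ _ _ _ hch)
  · apply FintypeCat.hom_ext; intro w
    obtain ⟨p, hp⟩ := hsurj w
    calc m w = m (inj p.1 p.2) := by rw [hp]
    _ = t.inj p.1 p.2 := ConcreteCategory.congr_hom (hm p.1) p.2
    _ = _ := by
        have hch := (hsurj w).choose_spec
        exact (congrArg (fun q : Σ j, A j => t.inj q.1 q.2) (hinj _ _ _ _ (hch.trans hp.symm))).symm

lemma fintypeEpiOfSurjective {A B : FintypeCat.{0}} (f : A ⟶ B)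
    (h : Function.Surjective f) : Epi f := by
  constructor
  intro Z u v huv
  apply FintypeCat.hom_ext; intro b
  obtain ⟨a, rfl⟩ := h b
  exact ConcreteCategory.congr_hom huv a

end FintypeHelpers
section Closure

variable {G H : Type} [Group G] [Group H]


lemma leftFree_pbAct {A B C : BiAct G H} (f : A ⟶ C) (g : B ⟶ C) (hA : LeftFree A) :
    LeftFree (pbAct f g) := by
  intro g₀ x hx
  exact hA g₀ (x : PbCarrier f g).1.1 (congrArg (fun p : PbCarrier f g => p.1.1) hx)

lemma leftFree_sigmaAct {J : Type} [Finite J] (A : J → BiAct G H)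
    (hA : ∀ j, LeftFree (A j)) : LeftFree (sigmaAct A) := by
  intro g₀ x hx
  have h2 := (Sigma.mk.inj_iff.mp (hx : (⟨(x : SigCarrier A).1, _⟩ : SigCarrier A) = _)).2
  exact hA (x : SigCarrier A).1 g₀ (x : SigCarrier A).2 (eq_of_heq h2)

lemma leftFree_doubleAct {B : BiAct G H} (S : Set B.V)
    (hS : ∀ (m : G × Hᵐᵒᵖ) b, b ∈ S → B.ρ m b ∈ S) (hB : LeftFree B) :
    LeftFree (doubleAct B S hS) := by
  intro g₀ x hx
  rcases hxx : (x : DblCarrier B S) with b | q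
  · rw [hxx] at hx
    exact hB g₀ b (Sum.inl.inj (hx : Sum.inl (B.ρ (g₀, 1) b) = Sum.inl b))
  · rw [hxx] at hx
    have : (⟨B.ρ (g₀,1) q.1, _⟩ : {b : B.V // b ∉ S}) = q :=
      Sum.inr.inj (hx : Sum.inr _ = Sum.inr q)
    exact hB g₀ q.1 (congrArg Subtype.val this)

end Closure
section SepClosure

variable {G H : Type} [Group G] [Group H] [Fintype G]

lemma iso_hom_inv_apply {M : Type} [Monoid M] {A B : ActCat M} (e : A ≅ B) (x : A.V) :
    e.inv.hom (e.hom.hom x) = x :=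
  ConcreteCategory.congr_hom (congrArg Action.Hom.hom e.hom_inv_id) x

lemma iso_inv_hom_apply {M : Type} [Monoid M] {A B : ActCat M} (e : A ≅ B) (y : B.V) :
    e.hom.hom (e.inv.hom y) = y :=
  ConcreteCategory.congr_hom (congrArg Action.Hom.hom e.inv_hom_id) y

lemma sep_pair_eq {T : ActCat Hᵐᵒᵖ} (g₀ : G) (t : T.V) :
    ((g₀, t) : G × T.V) = (sepBiset G H T).ρ ((g₀, 1) : G × Hᵐᵒᵖ) ((1, t) : G × T.V) := by
  rw [sep_rho]
  exact Prod.ext (mul_one g₀).symm (rho_one_apply T t).symm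

lemma sep_pair_eq' {T : ActCat Hᵐᵒᵖ} (m : Hᵐᵒᵖ) (t : T.V) :
    ((1, T.ρ m t) : G × T.V) = (sepBiset G H T).ρ ((1, m) : G × Hᵐᵒᵖ) ((1, t) : G × T.V) := by
  rw [sep_rho]
  exact Prod.ext (mul_one 1).symm rfl

lemma sep_pair_inv {T : ActCat Hᵐᵒᵖ} (p : G × T.V) :
    ((1, p.2) : G × T.V) = (sepBiset G H T).ρ ((p.1⁻¹, 1) : G × Hᵐᵒᵖ) p := by
  rw [sep_rho]
  exact Prod.ext (inv_mul_cancel p.1).symm (rho_one_apply T p.2).symm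

/-- Carrier of the right `H`-set presenting the pullback of separable bisets. -/
def PbSepCarrier {A B C : BiAct G H} (f : A ⟶ C) (g : B ⟶ C) {T : ActCat Hᵐᵒᵖ}
    (e : A ≅ sepBiset G H T) : Type :=
  {q : T.V × B.V // f.hom (e.inv.hom ((1, q.1) : G × T.V)) = g.hom q.2}

instance {A B C : BiAct G H} (f : A ⟶ C) (g : B ⟶ C) {T : ActCat Hᵐᵒᵖ}
    (e : A ≅ sepBiset G H T) : Finite (PbSepCarrier f g e) := by
  unfold PbSepCarrier; infer_instance

noncomputable def pbSepT {A B C : BiAct G H} (f : A ⟶ C) (g : B ⟶ C) {T : ActCat Hᵐᵒᵖ}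
    (e : A ≅ sepBiset G H T) : ActCat Hᵐᵒᵖ where
  V := letI := Fintype.ofFinite (PbSepCarrier f g e); FintypeCat.of (PbSepCarrier f g e)
  ρ :=
    { toFun := fun m => FintypeCat.homMk fun (q : PbSepCarrier f g e) => (⟨(T.ρ m q.1.1, B.ρ ((1 : G), m) q.1.2), by
        rw [sep_pair_eq' m q.1.1, hom_rho, hom_rho, q.2, hom_rho]⟩ : PbSepCarrier f g e)
      map_one' := by
        apply FintypeCat.hom_ext; intro (q : PbSepCarrier f g e)
        exact Subtype.ext (Prod.ext (rho_one_apply T q.1.1) (rho_one_apply B q.1.2))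
      map_mul' := by
        intro a b
        apply FintypeCat.hom_ext; intro (q : PbSepCarrier f g e)
        refine Subtype.ext (Prod.ext (rho_rho T a b q.1.1).symm ?_)
        show B.ρ ((1:G), a * b) q.1.2 = B.ρ ((1:G), a) (B.ρ ((1:G), b) q.1.2)
        rw [rho_rho]
        show B.ρ ((1:G), a*b) q.1.2 = B.ρ ((1:G) * 1, a * b) q.1.2
        rw [one_mul] }

/-- The pullback of bisets is separable as soon as the first leg's source is. -/
lemma separable_pbAct {A B C : BiAct G H} (f : A ⟶ C) (g : B ⟶ C)
    (hA : Separable G H A) : Separable G H (pbAct f g) := by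
  obtain ⟨T, ⟨e⟩⟩ := hA
  refine ⟨pbSepT f g e, ⟨?_⟩⟩
  refine Action.mkIso (FintypeCat.equivEquivIso ?_) ?_
  · refine
      { toFun := fun (p : PbCarrier f g) =>
          ((e.hom.hom p.1.1 : G × T.V).1,
            ⟨((e.hom.hom p.1.1 : G × T.V).2,
              B.ρ (((e.hom.hom p.1.1 : G × T.V).1⁻¹, 1) : G × Hᵐᵒᵖ) p.1.2), ?_⟩)
        invFun := fun q => (⟨(e.inv.hom ((q.1, q.2.1.1) : G × T.V),
            B.ρ ((q.1, 1) : G × Hᵐᵒᵖ) q.2.1.2), ?_⟩ : PbCarrier f g)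
        left_inv := ?_
        right_inv := ?_ }
    · rw [sep_pair_inv (e.hom.hom p.1.1 : G × T.V), hom_rho, iso_hom_inv_apply, hom_rho,
        p.2, hom_rho]
    · rw [sep_pair_eq q.1 q.2.1.1, hom_rho, hom_rho, q.2.2, hom_rho]
    · intro p
      refine Subtype.ext (Prod.ext ?_ ?_)
      · exact iso_hom_inv_apply e p.1.1
      · exact rho_cancel B (by exact Prod.ext (mul_inv_cancel _) (one_mul 1)) p.1.2
    · intro q
      have hq : e.hom.hom (e.inv.hom ((q.1, q.2.1.1) : G × T.V)) = (q.1, q.2.1.1) :=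
        iso_inv_hom_apply e _
      refine Prod.ext ?_ (Subtype.ext (Prod.ext ?_ ?_))
      · dsimp only
        rw [hq]
      · dsimp only
        rw [hq]
      · dsimp only
        rw [hq]
        exact rho_cancel B (by exact Prod.ext (inv_mul_cancel _) (one_mul 1)) q.2.1.2
  · intro m
    apply FintypeCat.hom_ext; intro (p : PbCarrier f g)
    refine Prod.ext ?_ (Subtype.ext (Prod.ext ?_ ?_))
    · show (e.hom.hom (A.ρ m p.1.1) : G × T.V).1 = m.1 * (e.hom.hom p.1.1 : G × T.V).1
      rw [hom_rho, sep_rho]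
    · show (e.hom.hom (A.ρ m p.1.1) : G × T.V).2 = T.ρ m.2 (e.hom.hom p.1.1 : G × T.V).2
      rw [hom_rho, sep_rho]
    · show B.ρ (((e.hom.hom (A.ρ m p.1.1) : G × T.V).1⁻¹, 1) : G × Hᵐᵒᵖ) (B.ρ m p.1.2)
        = B.ρ (((1 : G), m.2) : G × Hᵐᵒᵖ)
            (B.ρ (((e.hom.hom p.1.1 : G × T.V).1⁻¹, 1) : G × Hᵐᵒᵖ) p.1.2)
      have h1 : (e.hom.hom (A.ρ m p.1.1) : G × T.V).1 = m.1 * (e.hom.hom p.1.1 : G × T.V).1 := by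
        rw [hom_rho, sep_rho]
      rw [rho_rho, rho_rho]
      show B.ρ ((((e.hom.hom (A.ρ m p.1.1) : G × T.V).1⁻¹) * m.1, (1:Hᵐᵒᵖ) * m.2) : G × Hᵐᵒᵖ) p.1.2
        = B.ρ (((1:G) * (e.hom.hom p.1.1 : G × T.V).1⁻¹, m.2 * 1) : G × Hᵐᵒᵖ) p.1.2
      rw [show ((((e.hom.hom (A.ρ m p.1.1) : G × T.V).1⁻¹) * m.1, (1:Hᵐᵒᵖ) * m.2) : G × Hᵐᵒᵖ)
          = (((1:G) * (e.hom.hom p.1.1 : G × T.V).1⁻¹, m.2 * 1) : G × Hᵐᵒᵖ) from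
        Prod.ext (by
          show ((e.hom.hom (A.ρ m p.1.1) : G × T.V).1⁻¹) * m.1
            = 1 * (e.hom.hom p.1.1 : G × T.V).1⁻¹
          rw [h1, mul_inv_rev, mul_assoc, inv_mul_cancel, mul_one, one_mul])
        (by
          show (1:Hᵐᵒᵖ) * m.2 = m.2 * 1
          rw [one_mul, mul_one])]

/-- The disjoint union of separable bisets is separable. -/
lemma separable_sigmaAct {J : Type} [Finite J] (A : J → BiAct G H)
    (hA : ∀ j, Separable G H (A j)) : Separable G H (sigmaAct A) := by
  have e : ∀ j, A j ≅ sepBiset G H ((hA j).choose) := fun j => (hA j).choose_spec.some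
  refine ⟨sigmaAct (fun j => (hA j).choose), ⟨?_⟩⟩
  refine Action.mkIso (FintypeCat.equivEquivIso ?_) ?_
  · refine
      { toFun := fun (p : SigCarrier A) =>
          (((e p.1).hom.hom p.2 : G × ((hA p.1).choose).V).1,
           (⟨p.1, ((e p.1).hom.hom p.2 : G × ((hA p.1).choose).V).2⟩ :
             SigCarrier (fun j => (hA j).choose)))
        invFun := fun q => (⟨q.2.1,
            (e q.2.1).inv.hom ((q.1, q.2.2) : G × ((hA q.2.1).choose).V)⟩ : SigCarrier A)
        left_inv := ?_
        right_inv := ?_ }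
    · intro p
      exact congrArg (Sigma.mk p.1) (iso_hom_inv_apply (e p.1) p.2)
    · intro q
      have hq : (e q.2.1).hom.hom ((e q.2.1).inv.hom ((q.1, q.2.2) : G × ((hA q.2.1).choose).V))
          = (q.1, q.2.2) := iso_inv_hom_apply _ _
      refine Prod.ext ?_ ?_
      · dsimp only
        rw [hq]
      · dsimp only
        rw [hq]
        rfl
  · intro m
    apply FintypeCat.hom_ext; intro (p : SigCarrier A)
    refine Prod.ext ?_ ?_
    · show ((e p.1).hom.hom ((A p.1).ρ m p.2) : G × ((hA p.1).choose).V).1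
        = m.1 * ((e p.1).hom.hom p.2 : G × ((hA p.1).choose).V).1
      rw [hom_rho, sep_rho]
    · show (⟨p.1, ((e p.1).hom.hom ((A p.1).ρ m p.2) : G × ((hA p.1).choose).V).2⟩ :
          SigCarrier (fun j => (hA j).choose))
        = ⟨p.1, ((hA p.1).choose).ρ m.2 ((e p.1).hom.hom p.2 : G × ((hA p.1).choose).V).2⟩
      refine congrArg (Sigma.mk p.1) ?_
      rw [hom_rho, sep_rho]

/-- The double of a separable biset along an invariant set is separable. -/
lemma separable_doubleAct {B : BiAct G H} (S : Set B.V)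
    (hS : ∀ (m : G × Hᵐᵒᵖ) b, b ∈ S → B.ρ m b ∈ S) (hB : Separable G H B) :
    Separable G H (doubleAct B S hS) := by
  obtain ⟨T, ⟨e⟩⟩ := hB
  have hS' : ∀ (m : Hᵐᵒᵖ) t, t ∈ {t : T.V | e.inv.hom ((1, t) : G × T.V) ∈ S}
      → T.ρ m t ∈ {t : T.V | e.inv.hom ((1, t) : G × T.V) ∈ S} := by
    intro m t ht
    show e.inv.hom ((1, T.ρ m t) : G × T.V) ∈ S
    rw [sep_pair_eq' m t, hom_rho]
    exact hS _ _ ht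
  have key : ∀ b : B.V, (e.hom.hom b : G × T.V).2
      ∈ {t : T.V | e.inv.hom ((1, t) : G × T.V) ∈ S} ↔ b ∈ S := by
    intro b
    show e.inv.hom ((1, (e.hom.hom b : G × T.V).2) : G × T.V) ∈ S ↔ b ∈ S
    rw [sep_pair_inv (e.hom.hom b : G × T.V), hom_rho, iso_hom_inv_apply]
    constructor
    · intro h
      have h2 := hS ((e.hom.hom b : G × T.V).1, 1) _ h
      rwa [rho_cancel B (Prod.ext (mul_inv_cancel _) (one_mul 1))] at h2
    · exact fun h => hS _ _ h
  refine ⟨doubleAct T _ hS', ⟨?_⟩⟩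
  refine Action.mkIso (FintypeCat.equivEquivIso ?_) ?_
  · refine
      { toFun := fun (p : DblCarrier B S) =>
          match p with
          | Sum.inl b => ((e.hom.hom b : G × T.V).1,
              (Sum.inl (e.hom.hom b : G × T.V).2 : DblCarrier T _))
          | Sum.inr q => ((e.hom.hom q.1 : G × T.V).1,
              (Sum.inr ⟨(e.hom.hom q.1 : G × T.V).2,
                fun hmem => q.2 ((key q.1).mp hmem)⟩ : DblCarrier T _))
        invFun := fun q =>
          match q with
          | (g₁, Sum.inl t) => (Sum.inl (e.inv.hom ((g₁, t) : G × T.V)) : DblCarrier B S)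
          | (g₁, Sum.inr t) => (Sum.inr ⟨e.inv.hom ((g₁, t.1) : G × T.V), by
              rw [sep_pair_eq g₁ t.1, hom_rho]
              exact not_mem_of_rho hS _ t.2⟩ : DblCarrier B S)
        left_inv := ?_
        right_inv := ?_ }
    · intro p
      rcases p with b | q
      · exact congrArg Sum.inl (iso_hom_inv_apply e b)
      · exact congrArg Sum.inr (Subtype.ext (iso_hom_inv_apply e q.1))
    · intro q
      obtain ⟨g₁, s⟩ := q
      rcases s with t | t
      · have hq : e.hom.hom (e.inv.hom ((g₁, t) : G × T.V)) = (g₁, t) := iso_inv_hom_apply _ _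
        refine Prod.ext ?_ ?_
        · dsimp only
          rw [hq]
        · dsimp only
          rw [hq]
      · have hq : e.hom.hom (e.inv.hom ((g₁, t.1) : G × T.V)) = (g₁, t.1) :=
          iso_inv_hom_apply _ _
        refine Prod.ext ?_ ?_
        · dsimp only
          rw [hq]
        · dsimp only
          refine congrArg Sum.inr (Subtype.ext ?_)
          show (e.hom.hom (e.inv.hom ((g₁, t.1) : G × T.V)) : G × T.V).2 = t.1
          rw [hq]
  · intro m
    apply FintypeCat.hom_ext; intro (p : DblCarrier B S)
    rcases p with b | q
    · refine Prod.ext ?_ ?_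
      · show (e.hom.hom (B.ρ m b) : G × T.V).1 = m.1 * (e.hom.hom b : G × T.V).1
        rw [hom_rho, sep_rho]
      · show (Sum.inl (e.hom.hom (B.ρ m b) : G × T.V).2 : DblCarrier T _)
          = Sum.inl (T.ρ m.2 (e.hom.hom b : G × T.V).2)
        rw [hom_rho, sep_rho]
    · refine Prod.ext ?_ ?_
      · show (e.hom.hom (B.ρ m q.1) : G × T.V).1 = m.1 * (e.hom.hom q.1 : G × T.V).1
        rw [hom_rho, sep_rho]
      · refine congrArg Sum.inr (Subtype.ext ?_)
        show (e.hom.hom (B.ρ m q.1) : G × T.V).2 = T.ρ m.2 (e.hom.hom q.1 : G × T.V).2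
        rw [hom_rho, sep_rho]

end SepClosure
section Compare

variable {G H : Type} [Group G] [Group H]

lemma sig_map_snd {X : BiAct H G} {Y C : BiAct G H} (f : Y ⟶ C) (h : H) (g : G)
    (p : X.V × Y.V) :
    sig X C h g (p.1, f.hom p.2) = ((sig X Y h g p).1, f.hom ((sig X Y h g p).2)) :=
  Prod.ext rfl (hom_rho f _ _).symm

lemma sig_map_fst {X C : BiAct H G} {Y : BiAct G H} (f : X ⟶ C) (h : H) (g : G)
    (p : X.V × Y.V) :
    sig C Y h g (f.hom p.1, p.2) = (f.hom ((sig X Y h g p).1), (sig X Y h g p).2) :=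
  Prod.ext (hom_rho f _ _).symm rfl

variable [Fintype G]

/-- Injectivity of the pullback comparison map, second variable. -/
lemma pb_inj_snd {X : BiAct H G} (hX : LeftFree X) {A B C : BiAct G H}
    (hC : Separable G H C) (f : A ⟶ C) (g : B ⟶ C)
    (x x' : X.V) (q q' : PbCarrier f g)
    (h1 : Quot.mk (pairRel X A) (x, q.1.1) = Quot.mk (pairRel X A) (x', q'.1.1))
    (h2 : Quot.mk (pairRel X B) (x, q.1.2) = Quot.mk (pairRel X B) (x', q'.1.2)) :
    Quot.mk (pairRel X (pbAct f g)) (x, q) = Quot.mk (pairRel X (pbAct f g)) (x', q') := by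
  rw [pair_mk_eq_iff] at h1 h2 ⊢
  obtain ⟨h, g0, hh⟩ := h1
  obtain ⟨h', g0', hh'⟩ := h2
  have e1 := sig_map_snd (X := X) f h g0 (x, q.1.1)
  rw [← hh] at e1
  have e2 := sig_map_snd (X := X) g h' g0' (x, q.1.2)
  rw [← hh'] at e2
  rw [show g.hom q.1.2 = f.hom q.1.1 from q.2.symm,
    show g.hom q'.1.2 = f.hom q'.1.1 from q'.2.symm] at e2
  have e3 : sig X C h g0 (x, f.hom q.1.1) = sig X C h' g0' (x, f.hom q.1.1) :=
    e1.trans e2.symm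
  have e4 : sig X C (h'⁻¹ * h) (g0'⁻¹ * g0) (x, f.hom q.1.1) = (x, f.hom q.1.1) := by
    rw [← sig_sig, e3, sig_sig, inv_mul_cancel, inv_mul_cancel, sig_one]
  obtain ⟨hh1, hg1⟩ := sig_free hX hC e4
  have hh2 : h' = h := inv_mul_eq_one.mp hh1
  have hg2 : g0' = g0 := inv_mul_eq_one.mp hg1
  rw [hh2, hg2] at hh'
  have c1 : x' = X.ρ ((h, op g0⁻¹) : H × Gᵐᵒᵖ) x := congrArg Prod.fst hh
  have c2 : q'.1.1 = A.ρ ((g0, op h⁻¹) : G × Hᵐᵒᵖ) q.1.1 := congrArg Prod.snd hh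
  have c3 : q'.1.2 = B.ρ ((g0, op h⁻¹) : G × Hᵐᵒᵖ) q.1.2 := congrArg Prod.snd hh'
  exact ⟨h, g0, Prod.ext c1 (Subtype.ext (Prod.ext c2 c3))⟩

/-- Surjectivity of the pullback comparison map, second variable. -/
lemma pb_surj_snd {X : BiAct H G} {A B C : BiAct G H} (f : A ⟶ C) (g : B ⟶ C)
    (x x' : X.V) (a : A.V) (b : B.V)
    (hfg : Quot.mk (pairRel X C) (x, f.hom a) = Quot.mk (pairRel X C) (x', g.hom b)) :
    ∃ q : PbCarrier f g, q.1.1 = a ∧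
      Quot.mk (pairRel X B) (x, q.1.2) = Quot.mk (pairRel X B) (x', b) := by
  rw [pair_mk_eq_iff] at hfg
  obtain ⟨h, g0, hh⟩ := hfg
  have hb : g.hom (B.ρ ((g0⁻¹, op h) : G × Hᵐᵒᵖ) b) = f.hom a := by
    rw [hom_rho, show g.hom b = C.ρ ((g0, op h⁻¹) : G × Hᵐᵒᵖ) (f.hom a) from
      congrArg Prod.snd hh]
    exact rho_cancel C (Prod.ext (inv_mul_cancel g0)
      (by show op _ * op _ = 1; rw [← op_mul, inv_mul_cancel, op_one])) _
  refine ⟨⟨(a, B.ρ ((g0⁻¹, op h) : G × Hᵐᵒᵖ) b), hb.symm⟩, rfl, ?_⟩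
  rw [pair_mk_eq_iff]
  have c1 : x' = X.ρ ((h, op g0⁻¹) : H × Gᵐᵒᵖ) x := congrArg Prod.fst hh
  have c2 : b = B.ρ ((g0, op h⁻¹) : G × Hᵐᵒᵖ) (B.ρ ((g0⁻¹, op h) : G × Hᵐᵒᵖ) b) :=
    (rho_cancel B (Prod.ext (mul_inv_cancel g0)
      (by show op _ * op _ = 1; rw [← op_mul, mul_inv_cancel, op_one])) b).symm
  exact ⟨h, g0, Prod.ext c1 c2⟩

/-- Injectivity of the pullback comparison map, first variable. -/
lemma pb_inj_fst {Y : BiAct G H} (hY : Separable G H Y) {A B C : BiAct H G}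
    (hC : LeftFree C) (f : A ⟶ C) (g : B ⟶ C)
    (q q' : PbCarrier f g) (y y' : Y.V)
    (h1 : Quot.mk (pairRel A Y) (q.1.1, y) = Quot.mk (pairRel A Y) (q'.1.1, y'))
    (h2 : Quot.mk (pairRel B Y) (q.1.2, y) = Quot.mk (pairRel B Y) (q'.1.2, y')) :
    Quot.mk (pairRel (pbAct f g) Y) (q, y) = Quot.mk (pairRel (pbAct f g) Y) (q', y') := by
  rw [pair_mk_eq_iff] at h1 h2 ⊢
  obtain ⟨h, g0, hh⟩ := h1
  obtain ⟨h', g0', hh'⟩ := h2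
  have e1 := sig_map_fst (Y := Y) f h g0 (q.1.1, y)
  rw [← hh] at e1
  have e2 := sig_map_fst (Y := Y) g h' g0' (q.1.2, y)
  rw [← hh'] at e2
  rw [show g.hom q.1.2 = f.hom q.1.1 from q.2.symm,
    show g.hom q'.1.2 = f.hom q'.1.1 from q'.2.symm] at e2
  have e3 : sig C Y h g0 (f.hom q.1.1, y) = sig C Y h' g0' (f.hom q.1.1, y) :=
    e1.trans e2.symm
  have e4 : sig C Y (h'⁻¹ * h) (g0'⁻¹ * g0) (f.hom q.1.1, y) = (f.hom q.1.1, y) := by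
    rw [← sig_sig, e3, sig_sig, inv_mul_cancel, inv_mul_cancel, sig_one]
  obtain ⟨hh1, hg1⟩ := sig_free hC hY e4
  have hh2 : h' = h := inv_mul_eq_one.mp hh1
  have hg2 : g0' = g0 := inv_mul_eq_one.mp hg1
  rw [hh2, hg2] at hh'
  have c1 : q'.1.1 = A.ρ ((h, op g0⁻¹) : H × Gᵐᵒᵖ) q.1.1 := congrArg Prod.fst hh
  have c2 : q'.1.2 = B.ρ ((h, op g0⁻¹) : H × Gᵐᵒᵖ) q.1.2 := congrArg Prod.fst hh'
  have c3 : y' = Y.ρ ((g0, op h⁻¹) : G × Hᵐᵒᵖ) y := congrArg Prod.snd hh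
  exact ⟨h, g0, Prod.ext (Subtype.ext (Prod.ext c1 c2)) c3⟩

/-- Surjectivity of the pullback comparison map, first variable. -/
lemma pb_surj_fst {Y : BiAct G H} {A B C : BiAct H G} (f : A ⟶ C) (g : B ⟶ C)
    (a : A.V) (b : B.V) (y y' : Y.V)
    (hfg : Quot.mk (pairRel C Y) (f.hom a, y) = Quot.mk (pairRel C Y) (g.hom b, y')) :
    ∃ q : PbCarrier f g, q.1.1 = a ∧
      Quot.mk (pairRel B Y) (q.1.2, y) = Quot.mk (pairRel B Y) (b, y') := by
  rw [pair_mk_eq_iff] at hfg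
  obtain ⟨h, g0, hh⟩ := hfg
  have hb : g.hom (B.ρ ((h⁻¹, op g0) : H × Gᵐᵒᵖ) b) = f.hom a := by
    rw [hom_rho, show g.hom b = C.ρ ((h, op g0⁻¹) : H × Gᵐᵒᵖ) (f.hom a) from
      congrArg Prod.fst hh]
    exact rho_cancel C (Prod.ext (inv_mul_cancel h)
      (by show op _ * op _ = 1; rw [← op_mul, inv_mul_cancel, op_one])) _
  refine ⟨⟨(a, B.ρ ((h⁻¹, op g0) : H × Gᵐᵒᵖ) b), hb.symm⟩, rfl, ?_⟩
  rw [pair_mk_eq_iff]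
  have c1 : b = B.ρ ((h, op g0⁻¹) : H × Gᵐᵒᵖ) (B.ρ ((h⁻¹, op g0) : H × Gᵐᵒᵖ) b) :=
    (rho_cancel B (Prod.ext (mul_inv_cancel h)
      (by show op _ * op _ = 1; rw [← op_mul, mul_inv_cancel, op_one])) b).symm
  have c2 : y' = Y.ρ ((g0, op h⁻¹) : G × Hᵐᵒᵖ) y := congrArg Prod.snd hh
  exact ⟨h, g0, Prod.ext c1 c2⟩

/-- Injectivity of the coproduct comparison map, second variable. -/
lemma sum_inj_snd {X : BiAct H G} {J : Type} [Finite J] (A : J → BiAct G H)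
    (j j' : J) (x x' : X.V) (a : (A j).V) (a' : (A j').V)
    (hh : Quot.mk (pairRel X (sigmaAct A)) (x, ⟨j, a⟩)
      = Quot.mk (pairRel X (sigmaAct A)) (x', ⟨j', a'⟩)) :
    (⟨j, Quot.mk (pairRel X (A j)) (x, a)⟩ : Σ i, PairSet X (A i))
      = ⟨j', Quot.mk (pairRel X (A j')) (x', a')⟩ := by
  rw [pair_mk_eq_iff] at hh
  obtain ⟨h, g0, hh⟩ := hh
  have hsnd : (⟨j', a'⟩ : SigCarrier A) = ⟨j, (A j).ρ ((g0, op h⁻¹) : G × Hᵐᵒᵖ) a⟩ :=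
    congrArg Prod.snd hh
  obtain ⟨hj, ha⟩ := Sigma.mk.inj_iff.mp hsnd
  subst hj
  refine Sigma.ext rfl (heq_of_eq ?_)
  rw [pair_mk_eq_iff]
  have c1 : x' = X.ρ ((h, op g0⁻¹) : H × Gᵐᵒᵖ) x := congrArg Prod.fst hh
  exact ⟨h, g0, Prod.ext c1 (eq_of_heq ha)⟩

/-- Injectivity of the coproduct comparison map, first variable. -/
lemma sum_inj_fst {Y : BiAct G H} {J : Type} [Finite J] (A : J → BiAct H G)
    (j j' : J) (y y' : Y.V) (a : (A j).V) (a' : (A j').V)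
    (hh : Quot.mk (pairRel (sigmaAct A) Y) (⟨j, a⟩, y)
      = Quot.mk (pairRel (sigmaAct A) Y) (⟨j', a'⟩, y')) :
    (⟨j, Quot.mk (pairRel (A j) Y) (a, y)⟩ : Σ i, PairSet (A i) Y)
      = ⟨j', Quot.mk (pairRel (A j') Y) (a', y')⟩ := by
  rw [pair_mk_eq_iff] at hh
  obtain ⟨h, g0, hh⟩ := hh
  have hfst : (⟨j', a'⟩ : SigCarrier A) = ⟨j, (A j).ρ ((h, op g0⁻¹) : H × Gᵐᵒᵖ) a⟩ :=
    congrArg Prod.fst hh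
  obtain ⟨hj, ha⟩ := Sigma.mk.inj_iff.mp hfst
  subst hj
  refine Sigma.ext rfl (heq_of_eq ?_)
  rw [pair_mk_eq_iff]
  have c2 : y' = Y.ρ ((g0, op h⁻¹) : G × Hᵐᵒᵖ) y := congrArg Prod.snd hh
  exact ⟨h, g0, Prod.ext (eq_of_heq ha) c2⟩

end Compare
section CatConstructions

variable {G H : Type} [Group G] [Group H]

/-! ### Pullbacks, coproducts and epis in `BiFin G H` -/

noncomputable def finPB {A B C : BiFin G H} (f : A ⟶ C) (g : B ⟶ C) : BiFin G H :=
  ⟨pbAct (A := A.obj) (B := B.obj) (C := C.obj) f.hom g.hom,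
    leftFree_pbAct (A := A.obj) (B := B.obj) (C := C.obj) f.hom g.hom A.property⟩

noncomputable def finPBCone {A B C : BiFin G H} (f : A ⟶ C) (g : B ⟶ C) :
    PullbackCone f g :=
  PullbackCone.mk (W := finPB f g)
    (show finPB f g ⟶ A from ObjectProperty.homMk (pbFst (A := A.obj) (B := B.obj) (C := C.obj) f.hom g.hom))
    (show finPB f g ⟶ B from ObjectProperty.homMk (pbSnd (A := A.obj) (B := B.obj) (C := C.obj) f.hom g.hom))
    (ObjectProperty.hom_ext _ (pbComm (A := A.obj) (B := B.obj) (C := C.obj) f.hom g.hom))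

noncomputable def finPBIsLimit {A B C : BiFin G H} (f : A ⟶ C) (g : B ⟶ C) :
    IsLimit (finPBCone f g) :=
  isLimitOfReflects (ObjectProperty.ι _)
    ((isLimitMapConePullbackConeEquiv (ObjectProperty.ι _) (finPBCone f g).condition).symm
      (pbIsLimit (A := A.obj) (B := B.obj) (C := C.obj) f.hom g.hom))

noncomputable def finCofan {J : Type} [Finite J] (A : J → BiFin G H) : Cofan A :=
  Cofan.mk (⟨sigmaAct (fun j => (A j).obj),
      leftFree_sigmaAct _ (fun j => (A j).property)⟩ : BiFin G H)
    (fun j => show A j ⟶ _ from ObjectProperty.homMk (sigmaInj (fun j => (A j).obj) j))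

noncomputable def finCofanIsColimit {J : Type} [Finite J] (A : J → BiFin G H) :
    IsColimit (finCofan A) :=
  isColimitOfReflects (ObjectProperty.ι _)
    ((isColimitMapCoconeCofanMkEquiv (ObjectProperty.ι _) _ _).symm
      (sigmaIsColimit (fun j => (A j).obj)))

lemma finEpiSurj {A B : BiFin G H} (f : A ⟶ B) (hf : Epi f) :
    Function.Surjective f.hom.hom := by
  have hS : ∀ (m : G × Hᵐᵒᵖ) b, b ∈ Set.range f.hom.hom → B.obj.ρ m b ∈ Set.range f.hom.hom := by
    rintro m b ⟨a, rfl⟩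
    exact ⟨A.obj.ρ m a, hom_rho f.hom m a⟩
  refine dbl_eq_of_epi f.hom hS ?_
  intro hcomp
  have h2 : (f ≫ (show B ⟶ (⟨doubleAct B.obj _ hS,
      leftFree_doubleAct _ hS B.property⟩ : BiFin G H) from ObjectProperty.homMk (dblInl B.obj _ hS)))
      = f ≫ (show B ⟶ (⟨doubleAct B.obj _ hS,
      leftFree_doubleAct _ hS B.property⟩ : BiFin G H) from ObjectProperty.homMk (dblMix B.obj _ hS)) :=
    ObjectProperty.hom_ext _ hcomp
  exact congrArg (fun φ => φ.hom) ((cancel_epi f).mp h2)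

/-! ### Pullbacks, coproducts and epis in `SepCat G H` -/

variable [Fintype G]

noncomputable def sepPB {A B C : SepCat G H} (f : A ⟶ C) (g : B ⟶ C) : SepCat G H :=
  ⟨finPB (A := A.obj) (B := B.obj) (C := C.obj) f.hom g.hom,
    separable_pbAct (A := A.obj.obj) (B := B.obj.obj) (C := C.obj.obj) f.hom.hom g.hom.hom A.property⟩

noncomputable def sepPBCone {A B C : SepCat G H} (f : A ⟶ C) (g : B ⟶ C) :
    PullbackCone f g :=
  PullbackCone.mk (W := sepPB f g)
    (show sepPB f g ⟶ A from ObjectProperty.homMk (ObjectProperty.homMk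
      (pbFst (A := A.obj.obj) (B := B.obj.obj) (C := C.obj.obj) f.hom.hom g.hom.hom)))
    (show sepPB f g ⟶ B from ObjectProperty.homMk (ObjectProperty.homMk
      (pbSnd (A := A.obj.obj) (B := B.obj.obj) (C := C.obj.obj) f.hom.hom g.hom.hom)))
    (ObjectProperty.hom_ext _ (ObjectProperty.hom_ext _
      (pbComm (A := A.obj.obj) (B := B.obj.obj) (C := C.obj.obj) f.hom.hom g.hom.hom)))

noncomputable def sepPBIsLimit {A B C : SepCat G H} (f : A ⟶ C) (g : B ⟶ C) :
    IsLimit (sepPBCone f g) :=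
  isLimitOfReflects (ObjectProperty.ι _)
    ((isLimitMapConePullbackConeEquiv (ObjectProperty.ι _) (sepPBCone f g).condition).symm
      (finPBIsLimit (A := A.obj) (B := B.obj) (C := C.obj) f.hom g.hom))

noncomputable def sepCofan {J : Type} [Finite J] (A : J → SepCat G H) : Cofan A :=
  Cofan.mk (⟨(finCofan (fun j => (A j).obj)).pt,
      separable_sigmaAct (fun j => (A j).obj.obj) (fun j => (A j).property)⟩ : SepCat G H)
    (fun j => show A j ⟶ _ from ObjectProperty.homMk (ObjectProperty.homMk (sigmaInj (fun j => (A j).obj.obj) j)))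

noncomputable def sepCofanIsColimit {J : Type} [Finite J] (A : J → SepCat G H) :
    IsColimit (sepCofan A) :=
  isColimitOfReflects (ObjectProperty.ι _)
    ((isColimitMapCoconeCofanMkEquiv (ObjectProperty.ι _) _ _).symm
      (finCofanIsColimit (fun j => (A j).obj)))

lemma sepEpiSurj {A B : SepCat G H} (f : A ⟶ B) (hf : Epi f) :
    Function.Surjective f.hom.hom.hom := by
  have hS : ∀ (m : G × Hᵐᵒᵖ) b, b ∈ Set.range f.hom.hom.hom
      → B.obj.obj.ρ m b ∈ Set.range f.hom.hom.hom := by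
    rintro m b ⟨a, rfl⟩
    exact ⟨A.obj.obj.ρ m a, hom_rho f.hom.hom m a⟩
  refine dbl_eq_of_epi f.hom.hom hS ?_
  intro hcomp
  have h2 : (f ≫ (show B ⟶ (⟨⟨doubleAct B.obj.obj _ hS,
      leftFree_doubleAct _ hS B.obj.property⟩,
      separable_doubleAct _ hS B.property⟩ : SepCat G H) from
        ObjectProperty.homMk (ObjectProperty.homMk (dblInl B.obj.obj _ hS))))
      = f ≫ (show B ⟶ (⟨⟨doubleAct B.obj.obj _ hS,
      leftFree_doubleAct _ hS B.obj.property⟩,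
      separable_doubleAct _ hS B.property⟩ : SepCat G H) from
        ObjectProperty.homMk (ObjectProperty.homMk (dblMix B.obj.obj _ hS))) :=
    ObjectProperty.hom_ext _ (ObjectProperty.hom_ext _ hcomp)
  exact congrArg (fun φ => φ.hom.hom) ((cancel_epi f).mp h2)

/-! ### Surjectivity of the induced maps of quotients -/

lemma pairMapSnd_surj {X : BiAct H G} {Y Y' : BiAct G H} (f : Y ⟶ Y')
    (hf : Function.Surjective f.hom) : Function.Surjective (pairMapSnd X f) := by
  intro w
  induction w using Quot.ind with
  | _ p =>
    obtain ⟨y, hy⟩ := hf p.2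
    exact ⟨Quot.mk _ (p.1, y),
      show Quot.mk (pairRel X Y') (p.1, f.hom y) = Quot.mk (pairRel X Y') p from
        congrArg (Quot.mk (pairRel X Y')) (Prod.ext rfl hy)⟩

lemma pairMapFst_surj {X X' : BiAct H G} {Y : BiAct G H} (f : X ⟶ X')
    (hf : Function.Surjective f.hom) : Function.Surjective (pairMapFst f Y) := by
  intro w
  induction w using Quot.ind with
  | _ p =>
    obtain ⟨x, hx⟩ := hf p.1
    exact ⟨Quot.mk _ (x, p.2),
      show Quot.mk (pairRel X' Y) (f.hom x, p.2) = Quot.mk (pairRel X' Y) p from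
        congrArg (Quot.mk (pairRel X' Y)) (Prod.ext hx rfl)⟩

end CatConstructions
section Main

variable (G H : Type) [Group G] [Group H] [Fintype G] [Fintype H]

lemma half1 (X : BiFin H G) : PreservesPCE (pairFstFunctor G H X.obj) := by
  refine ⟨⟨?_⟩, ?_, ?_⟩
  · -- pullbacks
    have key : ∀ (A B C : SepCat G H) (f : A ⟶ C) (g : B ⟶ C),
        PreservesLimit (cospan f g) (pairFstFunctor G H X.obj) := by
      intro A B C f g
      refine preservesLimit_of_preserves_limit_cone (sepPBIsLimit f g) ?_
      refine (isLimitMapConePullbackConeEquiv (pairFstFunctor G H X.obj) _).symm ?_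
      refine fintypePullbackIsLimit _ _ _ _ _ ?_ ?_
      · intro w w'
        induction w using Quot.ind with | _ p => ?_
        induction w' using Quot.ind with | _ p' => ?_
        intro h1 h2
        exact pb_inj_snd X.property C.property
          (f := f.hom.hom) (g := g.hom.hom) p.1 p'.1 p.2 p'.2 h1 h2
      · intro a b
        induction a using Quot.ind with | _ pa => ?_
        induction b using Quot.ind with | _ pb => ?_
        intro hab
        obtain ⟨q, hq1, hq2⟩ := pb_surj_snd (X := X.obj)
          (f := f.hom.hom) (g := g.hom.hom) pa.1 pb.1 pa.2 pb.2 hab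
        refine ⟨Quot.mk _ (pa.1, q), ?_, hq2⟩
        show Quot.mk (pairRel X.obj A.obj.obj) (pa.1, q.1.1)
          = Quot.mk (pairRel X.obj A.obj.obj) pa
        rw [hq1]
        rfl
    exact ⟨fun {K} => by
      haveI := key _ _ _ (K.map WalkingCospan.Hom.inl) (K.map WalkingCospan.Hom.inr)
      exact preservesLimit_of_iso_diagram _ (diagramIsoCospan K).symm⟩
  · intro J hJ
    have key : ∀ (A : J → SepCat G H),
        PreservesColimit (Discrete.functor A) (pairFstFunctor G H X.obj) := by
      intro A
      refine preservesColimit_of_preserves_colimit_cocone (sepCofanIsColimit A) ?_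
      refine (isColimitMapCoconeCofanMkEquiv (pairFstFunctor G H X.obj) _ _).symm ?_
      refine fintypeCofanIsColimit _ _ _ ?_ ?_
      · intro j j' a a'
        induction a using Quot.ind with | _ pa => ?_
        induction a' using Quot.ind with | _ pa' => ?_
        intro hh
        exact sum_inj_snd (X := X.obj) (fun i => (A i).obj.obj) j j'
          pa.1 pa'.1 pa.2 pa'.2 hh
      · intro w
        induction w using Quot.ind with | _ p => ?_
        exact ⟨⟨p.2.1, Quot.mk _ (p.1, p.2.2)⟩, rfl⟩
    exact ⟨⟨fun {K} => by
      haveI := key (K.obj ∘ Discrete.mk)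
      exact preservesColimit_of_iso_diagram _ (Discrete.natIsoFunctor (F := K)).symm⟩⟩
  · refine ⟨?_⟩
    intro A B f hf
    apply fintypeEpiOfSurjective
    exact pairMapSnd_surj (X := X.obj) f.hom.hom (sepEpiSurj f hf)

lemma half2 (Y : SepCat G H) : PreservesPCE (pairSndFunctor G H Y.obj.obj) := by
  refine ⟨⟨?_⟩, ?_, ?_⟩
  · have key : ∀ (A B C : BiFin H G) (f : A ⟶ C) (g : B ⟶ C),
        PreservesLimit (cospan f g) (pairSndFunctor G H Y.obj.obj) := by
      intro A B C f g
      refine preservesLimit_of_preserves_limit_cone (finPBIsLimit f g) ?_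
      refine (isLimitMapConePullbackConeEquiv (pairSndFunctor G H Y.obj.obj) _).symm ?_
      refine fintypePullbackIsLimit _ _ _ _ _ ?_ ?_
      · intro w w'
        induction w using Quot.ind with | _ p => ?_
        induction w' using Quot.ind with | _ p' => ?_
        intro h1 h2
        exact pb_inj_fst Y.property C.property
          (f := f.hom) (g := g.hom) p.1 p'.1 p.2 p'.2 h1 h2
      · intro a b
        induction a using Quot.ind with | _ pa => ?_
        induction b using Quot.ind with | _ pb => ?_
        intro hab
        obtain ⟨q, hq1, hq2⟩ := pb_surj_fst (Y := Y.obj.obj)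
          (f := f.hom) (g := g.hom) pa.1 pb.1 pa.2 pb.2 hab
        refine ⟨Quot.mk _ (q, pa.2), ?_, hq2⟩
        show Quot.mk (pairRel A.obj Y.obj.obj) (q.1.1, pa.2)
          = Quot.mk (pairRel A.obj Y.obj.obj) pa
        rw [hq1]
    exact ⟨fun {K} => by
      haveI := key _ _ _ (K.map WalkingCospan.Hom.inl) (K.map WalkingCospan.Hom.inr)
      exact preservesLimit_of_iso_diagram _ (diagramIsoCospan K).symm⟩
  · intro J hJ
    have key : ∀ (A : J → BiFin H G),
        PreservesColimit (Discrete.functor A) (pairSndFunctor G H Y.obj.obj) := by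
      intro A
      refine preservesColimit_of_preserves_colimit_cocone (finCofanIsColimit A) ?_
      refine (isColimitMapCoconeCofanMkEquiv (pairSndFunctor G H Y.obj.obj) _ _).symm ?_
      refine fintypeCofanIsColimit _ _ _ ?_ ?_
      · intro j j' a a'
        induction a using Quot.ind with | _ pa => ?_
        induction a' using Quot.ind with | _ pa' => ?_
        intro hh
        exact sum_inj_fst (Y := Y.obj.obj) (fun i => (A i).obj) j j'
          pa.2 pa'.2 pa.1 pa'.1 hh
      · intro w
        induction w using Quot.ind with | _ p => ?_
        exact ⟨⟨p.1.1, Quot.mk _ (p.1.2, p.2)⟩, rfl⟩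
    exact ⟨⟨fun {K} => by
      haveI := key (K.obj ∘ Discrete.mk)
      exact preservesColimit_of_iso_diagram _ (Discrete.natIsoFunctor (F := K)).symm⟩⟩
  · refine ⟨?_⟩
    intro A B f hf
    apply fintypeEpiOfSurjective
    exact pairMapFst_surj (Y := Y.obj.obj) f.hom (finEpiSurj f hf)

end Main
/-- **Statement 6**. For finite groups `G` and `H`, the functor
`- ×_{(H,G)} - : ^H Fin_G × (^G Fin_H)^sep → Fin` preserves pullbacks, finite coproducts
and epimorphisms separately in each variable. -/
theorem pairing_preserves_pce (G H : Type) [Group G] [Group H] [Fintype G] [Fintype H] :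
    (∀ X : BiFin H G, PreservesPCE (pairFstFunctor G H X.obj)) ∧
    (∀ Y : SepCat G H, PreservesPCE (pairSndFunctor G H Y.obj.obj)) := by
  exact ⟨fun X => half1 G H X, fun Y => half2 G H Y⟩

end Paper
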